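/- Let 0 = r_0 < r_1 < ... < r_n with r_1 = 1. Then the derivative of the Gelfond-Bernstein basis satisfies H'_{k,\Lambda}(t) = (\prod_{j=k+1}^n r_j / \prod_{j=k+1}^n (r_j - 1)) ( r_k H^{n-1}_{k-1,\Lambda_1}(t) - (r_{k+1}-1) H^{n-1}_{k,\Lambda_1}(t) ), where \Lambda_1 = (0, r_2 - 1, ..., r_n - 1), with the conventions H'_{0,\Lambda}(t) = -(\prod_{j=2}^n r_j/\prod_{j=2}^n (r_j-1)) H^{n-1}_{0,\Lambda_1}(t) and H'_{n,\Lambda}(t) = r_n t^{r_n - 1}. -/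

import Mathlib

/-- The divided difference `[x 0, ..., x n] f` at pairwise distinct points,
given by the explicit formula `∑ i, f (x i) / ∏_{j ≠ i} (x i - x j)`. -/
noncomputable def divSum (n : ℕ) (x : Fin (n+1) → ℝ) (f : ℝ → ℝ) : ℝ :=
  ∑ i : Fin (n+1), f (x i) / ∏ j ∈ Finset.univ.erase i, (x i - x j)


/-- The Gelfond-Bernstein basis function `H^n_{k,Λ}` associated with the sequence
`Λ = (r 0, ..., r n)`: `H^n_k (t) = (-1)^(n-k) r_{k+1} ⋯ r_n [r_k, ..., r_n] f_t`
for `k ≤ n-1` and `H^n_n (t) = t ^ (r n)`, where `f_t x = t ^ x` (real power). -/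
noncomputable def GB (n : ℕ) (r : Fin (n+1) → ℝ) (k : Fin (n+1)) (t : ℝ) : ℝ :=
  if k.val = n then t ^ (r k)
  else (-1 : ℝ) ^ (n - k.val) * (∏ j ∈ Finset.Ioi k, r j) *
    divSum (n - k.val)
      (fun i => r ⟨k.val + i.val, by have h1 := i.isLt; have h2 := k.isLt; omega⟩)
      (fun x => t ^ x)

/-- Derivative formula for the Gelfond-Bernstein basis when r 1 = 1
(here the order is n+1, i.e. the sequence is (0 = r 0, 1 = r 1, r 2, ..., r (n+1))). -/
theorem GBaux_prodIoiSucc (n a b : ℕ) (ha : a < n+1) (hb : b < n+2) (hab : b = a+1)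
    (g : Fin (n+2) → ℝ) (g' : Fin (n+1) → ℝ) (hg : ∀ j : Fin (n+1), g' j = g j.succ) :
    ∏ j ∈ Finset.Ioi (⟨a, ha⟩ : Fin (n+1)), g' j
      = ∏ j ∈ Finset.Ioi (⟨b, hb⟩ : Fin (n+2)), g j := by
  subst hab
  rw [funext hg]
  apply Finset.prod_nbij' (fun j => j.succ) (fun j => ⟨j.val - 1, by omega⟩)
  · intro j hj; simp [Fin.lt_def] at hj ⊢; omega
  · intro j hj; simp [Fin.lt_def] at hj ⊢; omega
  · intro j hj; ext; simp [Fin.lt_def] at hj ⊢; try omega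
  · intro j hj; ext; simp [Fin.lt_def] at hj ⊢; try omega
  · intro j hj; rfl

theorem GBaux_prodIoiSplit (N k : ℕ) (hk : k + 1 < N) (g : Fin N → ℝ) :
    ∏ j ∈ Finset.Ioi (⟨k, by omega⟩ : Fin N), g j
      = g ⟨k+1, hk⟩ * ∏ j ∈ Finset.Ioi (⟨k+1, hk⟩ : Fin N), g j := by
  rw [← Finset.prod_erase_mul _ _ (show (⟨k+1,hk⟩ : Fin N) ∈ Finset.Ioi ⟨k, by omega⟩ by
    simp [Fin.lt_def])]
  rw [mul_comm]
  congr 1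
  apply Finset.prod_congr _ (fun _ _ => rfl)
  apply Finset.ext
  intro j; simp [Fin.lt_def, Fin.ext_iff]; omega

theorem divSum_cast {m m' : ℕ} (h : m = m') (x : Fin (m+1) → ℝ) (f : ℝ → ℝ) :
    divSum m x f = divSum m' (fun i => x (Fin.cast (by omega) i)) f := by
  subst h; rfl

theorem divSum_congr (m : ℕ) {x y : Fin (m+1) → ℝ} (h : ∀ i, x i = y i) (f : ℝ → ℝ) :
    divSum m x f = divSum m y f := by
  rw [funext h]

theorem divSum_sub_one (m : ℕ) (x : Fin (m+1) → ℝ) (f : ℝ → ℝ) :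
    divSum m (fun i => x i - 1) f = divSum m x (fun a => f (a - 1)) := by
  unfold divSum
  simp only [sub_sub_sub_cancel_right]

theorem hasDerivAt_divSum (m : ℕ) (x : Fin (m+1) → ℝ) (t : ℝ) (ht : 0 < t) :
    HasDerivAt (fun t => divSum m x (fun a => t ^ a))
      (divSum m x (fun a => a * t ^ (a - 1))) t := by
  unfold divSum
  apply HasDerivAt.fun_sum
  intro i _
  exact (Real.hasDerivAt_rpow_const (Or.inl ht.ne')).div_const _

theorem divSum_split (m : ℕ) (x : Fin (m+2) → ℝ) (hx : Function.Injective x) (f : ℝ → ℝ) :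
    divSum (m+1) x (fun a => a * f a)
      = x 0 * divSum (m+1) x f + divSum m (fun i => x i.succ) f := by
  unfold divSum
  have step1 : ∑ i : Fin (m+2), (x i * f (x i)) / ∏ j ∈ Finset.univ.erase i, (x i - x j)
      - x 0 * ∑ i : Fin (m+2), f (x i) / ∏ j ∈ Finset.univ.erase i, (x i - x j)
      = ∑ i : Fin (m+2), (x i - x 0) * (f (x i) / ∏ j ∈ Finset.univ.erase i, (x i - x j)) := by
    rw [Finset.mul_sum, ← Finset.sum_sub_distrib]
    apply Finset.sum_congr rfl
    intro i _
    ring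
  beta_reduce
  rw [← sub_eq_iff_eq_add', step1, Fin.sum_univ_succ, sub_self, zero_mul, zero_add]
  apply Finset.sum_congr rfl
  intro i _
  have h0 : (0 : Fin (m+2)) ∈ (Finset.univ.erase i.succ) := by
    simp only [Finset.mem_erase, Finset.mem_univ, and_true]
    exact fun h => Fin.succ_ne_zero i h.symm
  rw [← Finset.prod_erase_mul _ _ h0]
  have hQ : ∏ j ∈ (Finset.univ.erase i.succ).erase 0, (x i.succ - x j)
      = ∏ j ∈ Finset.univ.erase i, (x i.succ - x j.succ) := by
    apply Finset.prod_nbij' (fun j => (⟨j.val - 1, by omega⟩ : Fin (m+1))) (fun j => j.succ)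
    · intro j hj
      simp only [Finset.mem_erase, Finset.mem_univ, and_true, ne_eq, Fin.ext_iff, Fin.val_succ, Fin.val_zero] at hj ⊢
      omega
    · intro j hj
      simp only [Finset.mem_erase, Finset.mem_univ, and_true, ne_eq, Fin.ext_iff, Fin.val_succ, Fin.val_zero] at hj ⊢
      omega
    · intro j hj
      simp only [Finset.mem_erase, Finset.mem_univ, and_true, ne_eq, Fin.ext_iff, Fin.val_succ, Fin.val_zero] at hj ⊢
      omega
    · intro j hj
      ext; simp
    · intro j hj
      simp only [Finset.mem_erase, Finset.mem_univ, and_true, ne_eq, Fin.ext_iff, Fin.val_succ, Fin.val_zero] at hj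
      congr 2
      all_goals (ext; simp; omega)
  have hc : x i.succ - x 0 ≠ 0 := by
    have := hx.ne (Fin.succ_ne_zero i)
    intro h; exact this (by linarith)
  rw [hQ] at *
  rw [mul_comm ((∏ j ∈ Finset.univ.erase i, (x i.succ - x j.succ))) (x i.succ - x 0)]
  rw [mul_div_assoc']
  rw [mul_div_mul_left _ _ hc]

theorem GB_eq (n k : ℕ) (hk : k ≤ n) (r : Fin (n+1) → ℝ) (t : ℝ) :
    GB n r ⟨k, Nat.lt_succ_of_le hk⟩ t
      = (-1 : ℝ)^(n-k) * (∏ j ∈ Finset.Ioi (⟨k, Nat.lt_succ_of_le hk⟩ : Fin (n+1)), r j) *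
        divSum (n-k) (fun i : Fin (n-k+1) => r ⟨k + i.val, by omega⟩) (fun a => t ^ a) := by
  rcases hk.eq_or_lt with rfl|h
  · rw [GB, if_pos rfl]
    have hIoi : Finset.Ioi (⟨k, by omega⟩ : Fin (k+1)) = ∅ := by
      apply Finset.ext; intro j; simp [Fin.lt_def]; omega
    rw [hIoi, Finset.prod_empty, divSum_cast (show k - k = 0 by omega)]
    simp [divSum, Nat.sub_self]
  · rw [GB, if_neg (by simp; omega)]

theorem GBderiv (m : ℕ) (x : Fin (m+2) → ℝ) (hx : Function.Injective x) (C t : ℝ)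
    (ht : 0 < t) :
    HasDerivAt (fun u => C * divSum (m+1) x (fun a => u ^ a))
      (C * (x 0 * divSum (m+1) (fun i => x i - 1) (fun a => t ^ a)
        + divSum m (fun i => x i.succ - 1) (fun a => t ^ a))) t := by
  have h2 := (hasDerivAt_divSum (m+1) x t ht).const_mul C
  have heq : C * (x 0 * divSum (m+1) (fun i => x i - 1) (fun a => t ^ a)
        + divSum m (fun i => x i.succ - 1) (fun a => t ^ a))
      = C * divSum (m+1) x (fun a => a * t ^ (a - 1)) := by
    congr 1
    rw [divSum_sub_one, divSum_sub_one, ← divSum_split m x hx (fun a => t ^ (a-1))]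
  rw [heq]
  exact h2

theorem stmt8 (n : ℕ) (r : Fin (n+2) → ℝ) (hr : StrictMono r) (h0 : r 0 = 0)
    (h1 : r 1 = 1) (t : ℝ) (ht : 0 < t) :
    (∀ k : ℕ, ∀ _hk1 : 1 ≤ k, ∀ _hk2 : k ≤ n,
      HasDerivAt (GB (n+1) r ⟨k, by omega⟩)
        (((∏ j ∈ Finset.Ioi (⟨k, by omega⟩ : Fin (n+2)), r j) /
            (∏ j ∈ Finset.Ioi (⟨k, by omega⟩ : Fin (n+2)), (r j - 1))) *
          (r ⟨k, by omega⟩ * GB n (fun i => r i.succ - 1) ⟨k - 1, by omega⟩ t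
            - (r ⟨k + 1, by omega⟩ - 1) * GB n (fun i => r i.succ - 1) ⟨k, by omega⟩ t)) t)
    ∧ HasDerivAt (GB (n+1) r 0)
        (-(((∏ j ∈ Finset.Ioi (1 : Fin (n+2)), r j) /
            (∏ j ∈ Finset.Ioi (1 : Fin (n+2)), (r j - 1))) *
          GB n (fun i => r i.succ - 1) 0 t)) t
    ∧ HasDerivAt (GB (n+1) r (Fin.last (n+1)))
        (r (Fin.last (n+1)) * t ^ (r (Fin.last (n+1)) - 1)) t := by
  have hgt1 : ∀ j : Fin (n+2), 1 < j.val → 1 < r j := by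
    intro j hj
    have : (1 : Fin (n+2)) < j := by
      rw [Fin.lt_def]; simpa using hj
    have := hr this
    rw [h1] at this
    exact this
  refine ⟨?_, ?_, ?_⟩
  · -- part 1
    intro k hk1 hk2
    set x : Fin ((n-k)+2) → ℝ := fun i => r ⟨k + i.val, by have := i.isLt; omega⟩ with hxdef
    have hx : Function.Injective x := by
      intro a b hab
      have h2 := hr.injective hab
      simp only [Fin.mk.injEq] at h2
      exact Fin.ext (by omega)
    have hfun : GB (n+1) r ⟨k, by omega⟩ = fun u : ℝ => (-1:ℝ)^((n-k)+1) *
        (∏ j ∈ Finset.Ioi (⟨k, by omega⟩ : Fin (n+2)), r j) *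
        divSum ((n-k)+1) x (fun a => u ^ a) := by
      funext u
      refine (GB_eq (n+1) k (by omega) r u).trans ?_
      rw [divSum_cast (show (n+1)-k = (n-k)+1 by omega)]
      congr 1
      rw [show (n+1)-k = (n-k)+1 from by omega]
    have hD := GBderiv (n-k) x hx ((-1:ℝ)^((n-k)+1) *
        (∏ j ∈ Finset.Ioi (⟨k, by omega⟩ : Fin (n+2)), r j)) t ht
    rw [← hfun] at hD
    have hx0 : x 0 = r ⟨k, by omega⟩ := by
      simp only [hxdef]
      congr 1
      all_goals (ext; simp)
    rw [hx0] at hD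
    have eQ : (∏ j ∈ Finset.Ioi (⟨k, by omega⟩ : Fin (n+2)), (r j - 1))
        = (r ⟨k+1, by omega⟩ - 1) * ∏ j ∈ Finset.Ioi (⟨k+1, by omega⟩ : Fin (n+2)), (r j - 1) :=
      GBaux_prodIoiSplit (n+2) k (by omega) (fun j => r j - 1)
    have eQa : (∏ j ∈ Finset.Ioi (⟨k-1, by omega⟩ : Fin (n+1)),
          ((fun i : Fin (n+1) => r i.succ - 1) j))
        = ∏ j ∈ Finset.Ioi (⟨k, by omega⟩ : Fin (n+2)), (r j - 1) :=
      GBaux_prodIoiSucc n (k-1) k (by omega) (by omega) (by omega) (fun j => r j - 1) _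
        (fun j => rfl)
    have eQb : (∏ j ∈ Finset.Ioi (⟨k, by omega⟩ : Fin (n+1)),
          ((fun i : Fin (n+1) => r i.succ - 1) j))
        = ∏ j ∈ Finset.Ioi (⟨k+1, by omega⟩ : Fin (n+2)), (r j - 1) :=
      GBaux_prodIoiSucc n k (k+1) (by omega) (by omega) rfl (fun j => r j - 1) _
        (fun j => rfl)
    have eD1 : divSum ((n-k)+1)
          (fun i : Fin ((n-k)+2) =>
            r (Fin.succ (⟨(k-1) + i.val, by have := i.isLt; omega⟩ : Fin (n+1))) - 1)
          (fun a => t ^ a)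
        = divSum ((n-k)+1) (fun i => x i - 1) (fun a => t ^ a) := by
      apply divSum_congr
      intro i
      simp only [hxdef]
      congr 2
      all_goals (ext; simp; omega)
    have eD2 : divSum (n-k)
          (fun i : Fin ((n-k)+1) =>
            r (Fin.succ (⟨k + i.val, by have := i.isLt; omega⟩ : Fin (n+1))) - 1)
          (fun a => t ^ a)
        = divSum (n-k) (fun i => x i.succ - 1) (fun a => t ^ a) := by
      apply divSum_congr
      intro i
      simp only [hxdef]
      congr 2
      all_goals (ext; simp)
    have hGBa : GB n (fun i => r i.succ - 1) ⟨k-1, by omega⟩ t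
        = (-1:ℝ)^((n-k)+1) * (∏ j ∈ Finset.Ioi (⟨k, by omega⟩ : Fin (n+2)), (r j - 1)) *
          divSum ((n-k)+1) (fun i => x i - 1) (fun a => t ^ a) := by
      refine (GB_eq n (k-1) (by omega) _ t).trans ?_
      rw [divSum_cast (show n-(k-1) = (n-k)+1 by omega)]
      exact congrArg₂ (· * ·)
        (congrArg₂ (· * ·) (by rw [show n-(k-1) = (n-k)+1 from by omega]) eQa) eD1
    have hGBb : GB n (fun i => r i.succ - 1) ⟨k, by omega⟩ t
        = (-1:ℝ)^(n-k) * (∏ j ∈ Finset.Ioi (⟨k+1, by omega⟩ : Fin (n+2)), (r j - 1)) *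
          divSum (n-k) (fun i => x i.succ - 1) (fun a => t ^ a) := by
      refine (GB_eq n k hk2 _ t).trans ?_
      exact congrArg₂ (· * ·) (congrArg₂ (· * ·) rfl eQb) eD2
    have hc : (0:ℝ) < r ⟨k+1, by omega⟩ - 1 := by
      have := hgt1 ⟨k+1, by omega⟩ (show 1 < k+1 by omega)
      linarith
    have hQb : (0:ℝ) < ∏ j ∈ Finset.Ioi (⟨k+1, by omega⟩ : Fin (n+2)), (r j - 1) := by
      apply Finset.prod_pos
      intro j hj
      have hj' : (k+1:ℕ) < j.val := by simpa [Fin.lt_def] using Finset.mem_Ioi.1 hj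
      have := hgt1 j (by omega)
      linarith
    have hEq : ((-1:ℝ)^((n-k)+1) * (∏ j ∈ Finset.Ioi (⟨k, by omega⟩ : Fin (n+2)), r j)) *
          (r ⟨k, by omega⟩ * divSum ((n-k)+1) (fun i => x i - 1) (fun a => t ^ a)
            + divSum (n-k) (fun i => x i.succ - 1) (fun a => t ^ a))
        = ((∏ j ∈ Finset.Ioi (⟨k, by omega⟩ : Fin (n+2)), r j) /
            (∏ j ∈ Finset.Ioi (⟨k, by omega⟩ : Fin (n+2)), (r j - 1))) *
          (r ⟨k, by omega⟩ * GB n (fun i => r i.succ - 1) ⟨k - 1, by omega⟩ t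
            - (r ⟨k + 1, by omega⟩ - 1) * GB n (fun i => r i.succ - 1) ⟨k, by omega⟩ t) := by
      rw [hGBa, hGBb, eQ]
      field_simp
      ring
    exact hEq ▸ hD
  · -- part 2
    set x : Fin (n+2) → ℝ := fun i => r ⟨0 + i.val, by have := i.isLt; omega⟩ with hxdef
    have hx : Function.Injective x := by
      intro a b hab
      have h2 := hr.injective hab
      simp only [Fin.mk.injEq] at h2
      exact Fin.ext (by omega)
    have hfun : GB (n+1) r 0 = fun u : ℝ => (-1:ℝ)^(n+1) *
        (∏ j ∈ Finset.Ioi (⟨0, by omega⟩ : Fin (n+2)), r j) *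
        divSum (n+1) x (fun a => u ^ a) := by
      funext u
      exact GB_eq (n+1) 0 (by omega) r u
    have hD := GBderiv n x hx ((-1:ℝ)^(n+1) *
        (∏ j ∈ Finset.Ioi (⟨0, by omega⟩ : Fin (n+2)), r j)) t ht
    rw [← hfun] at hD
    have hx0 : x 0 = 0 := by
      simp only [hxdef]
      rw [← h0]
      congr 1
      all_goals (ext; simp)
    rw [hx0] at hD
    have e1 : (∏ j ∈ Finset.Ioi (⟨0, by omega⟩ : Fin (n+1)),
          ((fun i : Fin (n+1) => r i.succ - 1) j))
        = ∏ j ∈ Finset.Ioi (1 : Fin (n+2)), (r j - 1) := by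
      rw [show (1 : Fin (n+2)) = ⟨1, by omega⟩ from Fin.ext (by simp)]
      exact GBaux_prodIoiSucc n 0 1 (by omega) (by omega) rfl (fun j => r j - 1) _
        (fun j => rfl)
    have e3 : divSum n
          (fun i : Fin (n+1) =>
            r (Fin.succ (⟨0 + i.val, by have := i.isLt; omega⟩ : Fin (n+1))) - 1)
          (fun a => t ^ a)
        = divSum n (fun i => x i.succ - 1) (fun a => t ^ a) := by
      apply divSum_congr
      intro i
      simp only [hxdef]
      congr 2
      all_goals (ext; simp)
    have hGB0 : GB n (fun i => r i.succ - 1) 0 t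
        = (-1:ℝ)^n * (∏ j ∈ Finset.Ioi (1 : Fin (n+2)), (r j - 1)) *
          divSum n (fun i => x i.succ - 1) (fun a => t ^ a) :=
      (GB_eq n 0 (by omega) _ t).trans (congrArg₂ (· * ·) (congrArg₂ (· * ·) rfl e1) e3)
    have eP : (∏ j ∈ Finset.Ioi (⟨0, by omega⟩ : Fin (n+2)), r j)
        = ∏ j ∈ Finset.Ioi (1 : Fin (n+2)), r j := by
      rw [GBaux_prodIoiSplit (n+2) 0 (by omega) r]
      rw [show (⟨0+1, by omega⟩ : Fin (n+2)) = (1 : Fin (n+2)) from Fin.ext (by simp)]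
      rw [h1, one_mul]
    have hQ1 : (0:ℝ) < ∏ j ∈ Finset.Ioi (1 : Fin (n+2)), (r j - 1) := by
      apply Finset.prod_pos
      intro j hj
      have hj' : (1:ℕ) < j.val := by simpa [Fin.lt_def] using Finset.mem_Ioi.1 hj
      have := hgt1 j hj'
      linarith
    have hEq : ((-1:ℝ)^(n+1) * (∏ j ∈ Finset.Ioi (⟨0, by omega⟩ : Fin (n+2)), r j)) *
          ((0:ℝ) * divSum (n+1) (fun i => x i - 1) (fun a => t ^ a)
            + divSum n (fun i => x i.succ - 1) (fun a => t ^ a))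
        = -(((∏ j ∈ Finset.Ioi (1 : Fin (n+2)), r j) /
            (∏ j ∈ Finset.Ioi (1 : Fin (n+2)), (r j - 1))) *
          GB n (fun i => r i.succ - 1) 0 t) := by
      rw [hGB0, eP]
      field_simp
      ring
    exact hEq ▸ hD
  · -- part 3
    have hfun : GB (n+1) r (Fin.last (n+1)) = fun u : ℝ => u ^ (r (Fin.last (n+1))) := by
      funext u
      rw [GB, if_pos (by simp)]
    rw [hfun]
    exact Real.hasDerivAt_rpow_const (Or.inl ht.ne')
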